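/- Let p(t) be an admissible Hilbert polynomial of degree d for subschemes of P^n, and let J be a strongly stable monomial ideal in k[x_0,...,x_n] such that k[x_0,...,x_n]/J has Hilbert polynomial p(t). Then J contains every monomial of sufficiently large degree in the variables x_{d+1},...,x_n; equivalently, for t ≥ reg(J), all monomials of k[x_{d+1},...,x_n]_t belong to J. -/

import Mathlib

open MvPolynomial

noncomputable section

/-- The total degree of an exponent vector. -/
def degOf {N : ℕ} (α : Fin N →₀ ℕ) : ℕ := α.sum fun _ e => e

/-- The degree `t` homogeneous component of a homogeneous ideal, as a `K`-subspace. -/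
def degPiece {K : Type*} [Field K] {N : ℕ} (I : Ideal (MvPolynomial (Fin N) K)) (t : ℕ) :
    Submodule K (MvPolynomial (Fin N) K) :=
  (Submodule.restrictScalars K
      (I : Submodule (MvPolynomial (Fin N) K) (MvPolynomial (Fin N) K)))
    ⊓ homogeneousSubmodule (Fin N) K t

/-- The Hilbert function of the quotient by a homogeneous ideal:
`dim_K (P/I)_t = dim_K P_t - dim_K I_t`. -/
def hilbF {K : Type*} [Field K] {N : ℕ} (I : Ideal (MvPolynomial (Fin N) K)) (t : ℕ) : ℕ :=
  Module.finrank K (homogeneousSubmodule (Fin N) K t) - Module.finrank K (degPiece I t)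

/-- The ideal generated by the monomials with exponents in `S`. -/
def monIdeal (K : Type*) [Field K] {N : ℕ} (S : Set (Fin N →₀ ℕ)) :
    Ideal (MvPolynomial (Fin N) K) :=
  Ideal.span ((fun a => (monomial a (1 : K))) '' S)

/-- A monomial ideal `J` is strongly stable: it is generated by monomials and for every
term `x^α ∈ J`, every `x_i ∣ x^α` and every `j > i`, also `(x_j/x_i)·x^α ∈ J`. -/
def SStable {K : Type*} [Field K] {N : ℕ} (J : Ideal (MvPolynomial (Fin N) K)) : Prop :=
  (∃ S : Set (Fin N →₀ ℕ), J = monIdeal K S) ∧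
  ∀ α : Fin N →₀ ℕ, (monomial α (1 : K)) ∈ J → ∀ i j : Fin N, i < j → α i ≠ 0 →
    (monomial (α - Finsupp.single i 1 + Finsupp.single j 1) (1 : K)) ∈ J

section Aux

variable {K : Type*} [Field K] {N : ℕ}

lemma degOf_eq_sum (α : Fin N →₀ ℕ) : degOf α = ∑ i, α i :=
  Finsupp.sum_fintype _ _ (fun _ => rfl)

lemma degOf_single (e : Fin N) (c : ℕ) : degOf (Finsupp.single e c) = c :=
  Finsupp.sum_single_index rfl

lemma degOf_add (a b : Fin N →₀ ℕ) : degOf (a + b) = degOf a + degOf b := by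
  simp [degOf_eq_sum, Finsupp.add_apply, Finset.sum_add_distrib]

lemma apply_le_degOf (α : Fin N →₀ ℕ) (i : Fin N) : α i ≤ degOf α := by
  rw [degOf_eq_sum]
  exact Finset.single_le_sum (fun j _ => Nat.zero_le _) (Finset.mem_univ i)

lemma monomial_mem_monIdeal {S : Set (Fin N →₀ ℕ)} {f : MvPolynomial (Fin N) K}
    (hf : f ∈ monIdeal K S) :
    ∀ β ∈ f.support, monomial β (1:K) ∈ monIdeal K S := by
  classical
  refine Submodule.span_induction
    (p := fun f _ => ∀ β ∈ f.support, monomial β (1:K) ∈ monIdeal K S) ?_ ?_ ?_ ?_ hf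
  · rintro x ⟨a, haS, rfl⟩ β hβ
    rw [support_monomial, if_neg (one_ne_zero)] at hβ
    rw [Finset.mem_singleton] at hβ
    rw [hβ]
    exact Ideal.subset_span ⟨a, haS, rfl⟩
  · simp
  · intro x y hx hy ihx ihy β hβ
    rcases Finset.mem_union.1 (support_add hβ) with h | h
    · exact ihx β h
    · exact ihy β h
  · intro a x hx ih β hβ
    rw [smul_eq_mul] at hβ
    have hc : coeff β (a * x) ≠ 0 := mem_support_iff.1 hβ
    rw [coeff_mul] at hc
    obtain ⟨⟨u, v⟩, huv, hne⟩ := Finset.exists_ne_zero_of_sum_ne_zero hc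
    have hv : coeff v x ≠ 0 := fun h => hne (by simp [h])
    have hadd : u + v = β := Finset.HasAntidiagonal.mem_antidiagonal.1 huv
    have hmono : monomial β (1:K) = monomial u 1 * monomial v 1 := by
      rw [monomial_mul, one_mul, hadd]
    rw [hmono]
    exact Ideal.mul_mem_left _ _ (ih v (mem_support_iff.2 hv))

lemma support_subset_of_mem_span {B : Set (Fin N →₀ ℕ)} {f : MvPolynomial (Fin N) K}
    (hf : f ∈ Submodule.span K ((fun a => monomial a (1:K)) '' B)) :
    ↑f.support ⊆ B := by
  classical
  refine Submodule.span_induction (p := fun f _ => ↑f.support ⊆ B) ?_ ?_ ?_ ?_ hf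
  · rintro x ⟨a, haB, rfl⟩ β hβ
    rw [Finset.mem_coe, support_monomial, if_neg one_ne_zero, Finset.mem_singleton] at hβ
    rw [hβ]; exact haB
  · simp
  · intro x y hx hy ihx ihy β hβ
    rcases Finset.mem_union.1 (support_add hβ) with h | h
    · exact ihx h
    · exact ihy h
  · intro c x hx ih β hβ
    exact ih (Finset.mem_coe.2 (support_smul (Finset.mem_coe.1 hβ)))

lemma eq_single_of_degOf_eq {α : Fin N →₀ ℕ} {e : Fin N} (h : degOf α = α e) :
    α = Finsupp.single e (degOf α) := by
  have hs : ∑ i ∈ Finset.univ.erase e, α i = 0 := by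
    have h2 := degOf_eq_sum α
    rw [← Finset.add_sum_erase _ _ (Finset.mem_univ e)] at h2
    omega
  ext i
  rcases eq_or_ne i e with rfl | hne
  · simp [h.symm]
  · have h0 : α i = 0 :=
      Finset.sum_eq_zero_iff.1 hs i (Finset.mem_erase.2 ⟨hne, Finset.mem_univ i⟩)
    rw [h0, Finsupp.single_eq_of_ne' (Ne.symm hne)]

variable {J : Ideal (MvPolynomial (Fin N) K)}

lemma moveUp
    (hst : ∀ α : Fin N →₀ ℕ, (monomial α (1 : K)) ∈ J → ∀ i j : Fin N, i < j → α i ≠ 0 →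
      (monomial (α - Finsupp.single i 1 + Finsupp.single j 1) (1 : K)) ∈ J)
    (e : Fin N) :
    ∀ m (α : Fin N →₀ ℕ), (∀ i, α i ≠ 0 → i ≤ e) → degOf α - α e = m →
      monomial α (1:K) ∈ J → monomial (Finsupp.single e (degOf α)) (1:K) ∈ J := by
  intro m
  induction m with
  | zero =>
    intro α hsupp hm hα
    have h1 := apply_le_degOf α e
    have he : degOf α = α e := by omega
    rw [← eq_single_of_degOf_eq he]
    exact hα
  | succ m ih =>
    intro α hsupp hm hα
    have h1 := apply_le_degOf α e
    have hsum : ∑ i ∈ Finset.univ.erase e, α i = m + 1 := by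
      have h2 := degOf_eq_sum α
      rw [← Finset.add_sum_erase _ _ (Finset.mem_univ e)] at h2
      omega
    obtain ⟨i, hi_mem, hi⟩ := Finset.exists_ne_zero_of_sum_ne_zero
      (show ∑ i ∈ Finset.univ.erase e, α i ≠ 0 by omega)
    have hie : i ≠ e := (Finset.mem_erase.1 hi_mem).1
    have hlt : i < e := lt_of_le_of_ne (hsupp i hi) hie
    set α' := α - Finsupp.single i 1 + Finsupp.single e 1 with hα'
    have hJ' : monomial α' 1 ∈ J := hst α hα i e hlt hi
    have hone : 1 ≤ α i := Nat.one_le_iff_ne_zero.2 hi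
    have happ : ∀ j, α' j = (α j - (if i = j then 1 else 0)) + (if e = j then 1 else 0) := by
      intro j
      simp [hα', Finsupp.add_apply, Finsupp.tsub_apply, Finsupp.single_apply]
    have KI : α' + Finsupp.single i 1 = α + Finsupp.single e 1 := by
      ext x
      simp only [hα', Finsupp.add_apply, Finsupp.tsub_apply, Finsupp.single_apply]
      rcases eq_or_ne i x with rfl | h1
      · rw [if_pos rfl, if_neg (show ¬ e = i from fun h => hie h.symm)]
        omega
      · rw [if_neg h1]
        split_ifs <;> omega
    have hdeg' : degOf α' = degOf α := by
      have h := congrArg degOf KI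
      simp only [degOf_add, degOf_single] at h
      omega
    have hsupp' : ∀ j, α' j ≠ 0 → j ≤ e := by
      intro j hj
      by_cases hje : j = e
      · exact hje.le
      by_cases hji : j = i
      · subst hji; exact hlt.le
      have hval : α' j = α j := by
        rw [happ j, if_neg (fun h => hji h.symm), if_neg (fun h => hje h.symm)]
        omega
      rw [hval] at hj
      exact hsupp j hj
    have hαe' : α' e = α e + 1 := by
      rw [happ e, if_neg hie, if_pos rfl]
      omega
    have := ih α' hsupp' (by omega) hJ'
    rwa [hdeg'] at this

lemma moveDown
    (hst : ∀ α : Fin N →₀ ℕ, (monomial α (1 : K)) ∈ J → ∀ i j : Fin N, i < j → α i ≠ 0 →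
      (monomial (α - Finsupp.single i 1 + Finsupp.single j 1) (1 : K)) ∈ J)
    (e : Fin N) :
    ∀ m (γ : Fin N →₀ ℕ), (∀ i, γ i ≠ 0 → e ≤ i) → degOf γ - γ e = m →
      monomial (Finsupp.single e (degOf γ)) (1:K) ∈ J → monomial γ (1:K) ∈ J := by
  intro m
  induction m with
  | zero =>
    intro γ hsupp hm hγ
    have h1 := apply_le_degOf γ e
    have he : degOf γ = γ e := by omega
    rwa [← eq_single_of_degOf_eq he] at hγ
  | succ m ih =>
    intro γ hsupp hm hγ
    have h1 := apply_le_degOf γ e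
    have hsum : ∑ i ∈ Finset.univ.erase e, γ i = m + 1 := by
      have h2 := degOf_eq_sum γ
      rw [← Finset.add_sum_erase _ _ (Finset.mem_univ e)] at h2
      omega
    obtain ⟨j, hj_mem, hj⟩ := Finset.exists_ne_zero_of_sum_ne_zero
      (show ∑ i ∈ Finset.univ.erase e, γ i ≠ 0 by omega)
    have hje : j ≠ e := (Finset.mem_erase.1 hj_mem).1
    have hlt : e < j := lt_of_le_of_ne (hsupp j hj) (Ne.symm hje)
    have hone : 1 ≤ γ j := Nat.one_le_iff_ne_zero.2 hj
    set γ' := γ - Finsupp.single j 1 + Finsupp.single e 1 with hγ'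
    have happ : ∀ x, γ' x = (γ x - (if j = x then 1 else 0)) + (if e = x then 1 else 0) := by
      intro x
      simp [hγ', Finsupp.add_apply, Finsupp.tsub_apply, Finsupp.single_apply]
    have KI : γ' + Finsupp.single j 1 = γ + Finsupp.single e 1 := by
      ext x
      simp only [hγ', Finsupp.add_apply, Finsupp.tsub_apply, Finsupp.single_apply]
      rcases eq_or_ne j x with rfl | h1
      · rw [if_pos rfl, if_neg (show ¬ e = j from fun h => hje h.symm)]
        omega
      · rw [if_neg h1]
        split_ifs <;> omega
    have hdeg' : degOf γ' = degOf γ := by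
      have h := congrArg degOf KI
      simp only [degOf_add, degOf_single] at h
      omega
    have hsupp' : ∀ x, γ' x ≠ 0 → e ≤ x := by
      intro x hx
      by_cases hxe : x = e
      · exact hxe.ge
      by_cases hxj : x = j
      · subst hxj; exact hlt.le
      have hval : γ' x = γ x := by
        rw [happ x, if_neg (fun h => hxj h.symm), if_neg (fun h => hxe h.symm)]
        omega
      rw [hval] at hx
      exact hsupp x hx
    have hγe' : γ' e = γ e + 1 := by
      rw [happ e, if_neg hje, if_pos rfl]
      omega
    have hJ' : monomial γ' (1:K) ∈ J := ih γ' hsupp' (by omega) (by rwa [hdeg'])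
    have h2 := hst γ' hJ' e j hlt (by rw [hγe']; omega)
    have KI2 : γ' - Finsupp.single e 1 + Finsupp.single j 1 = γ := by
      ext x
      simp only [hγ', Finsupp.add_apply, Finsupp.tsub_apply, Finsupp.single_apply]
      rcases eq_or_ne j x with rfl | h1
      · rw [if_pos rfl, if_neg (show ¬ e = j from fun h => hje h.symm)]
        omega
      · rw [if_neg h1]
        split_ifs <;> omega
    rwa [KI2] at h2

lemma degOf_finset_sum {ι : Type*} (s : Finset ι) (f : ι → (Fin N →₀ ℕ)) :
    degOf (∑ i ∈ s, f i) = ∑ i ∈ s, degOf (f i) := by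
  classical
  induction s using Finset.induction with
  | empty => simp [degOf]
  | insert _ _ h ih => rw [Finset.sum_insert h, Finset.sum_insert h, degOf_add, ih]

lemma degOf_degree (α : Fin N →₀ ℕ) : degOf α = α.degree := rfl

instance homog_fd (t : ℕ) : FiniteDimensional K (homogeneousSubmodule (Fin N) K t) :=
  Submodule.finiteDimensional_of_le (S₂ := restrictTotalDegree (Fin N) K t)
    (fun p hp => (mem_restrictTotalDegree _ _ _).2
      ((mem_homogeneousSubmodule _ _).1 hp).totalDegree_le)

lemma card_le_hilbF {S : Set (Fin N →₀ ℕ)} {J : Ideal (MvPolynomial (Fin N) K)}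
    (hJ : J = monIdeal K S) (t : ℕ) (B : Finset (Fin N →₀ ℕ))
    (hBdeg : ∀ α ∈ B, degOf α = t) (hBnot : ∀ α ∈ B, monomial α (1:K) ∉ J) :
    B.card ≤ hilbF J t := by
  classical
  set W := Submodule.span K ((fun a => monomial a (1:K)) '' (↑B : Set (Fin N →₀ ℕ))) with hW
  have hWle : W ≤ homogeneousSubmodule (Fin N) K t := by
    rw [hW, Submodule.span_le]
    rintro _ ⟨a, ha, rfl⟩
    exact (mem_homogeneousSubmodule _ _).2
      (isHomogeneous_monomial _ ((degOf_degree a) ▸ hBdeg a ha))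
  have hJle : degPiece J t ≤ homogeneousSubmodule (Fin N) K t := inf_le_right
  have hfinJ : FiniteDimensional K (degPiece J t) := Submodule.finiteDimensional_of_le hJle
  have hfinW : FiniteDimensional K W := Submodule.finiteDimensional_of_le hWle
  have hdisj : W ⊓ degPiece J t = ⊥ := by
    rw [eq_bot_iff]
    rintro f hf
    obtain ⟨hfW, hfJ, -⟩ := hf
    have hsupp := support_subset_of_mem_span hfW
    have hfJ' : f ∈ monIdeal K S := by rw [← hJ]; exact hfJ
    have hempty : f.support = ∅ := by
      by_contra hne
      obtain ⟨β, hβ⟩ := Finset.nonempty_of_ne_empty hne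
      exact hBnot β (hsupp hβ) (by rw [hJ]; exact monomial_mem_monIdeal hfJ' β hβ)
    rw [Submodule.mem_bot]
    exact support_eq_empty.1 hempty
  have hli : LinearIndependent K
      (fun (α : ↥(↑B : Set (Fin N →₀ ℕ))) => monomial (α : Fin N →₀ ℕ) (1:K)) := by
    have h2 := (basisMonomials (Fin N) K).linearIndependent.comp
      (Subtype.val : ↥(↑B : Set (Fin N →₀ ℕ)) → (Fin N →₀ ℕ)) Subtype.val_injective
    exact h2
  have hrange : Set.range
      (fun (α : ↥(↑B : Set (Fin N →₀ ℕ))) => monomial (α : Fin N →₀ ℕ) (1:K)) =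
      (fun a => monomial a (1:K)) '' (↑B : Set (Fin N →₀ ℕ)) := by
    rw [Set.image_eq_range]
  have hWrank : Module.finrank K W = B.card := by
    rw [hW, ← hrange, finrank_span_eq_card hli, ← Fintype.card_coe B]
    rfl
  have hsum := Submodule.finrank_sup_add_finrank_inf_eq W (degPiece J t)
  rw [hdisj, finrank_bot, add_zero] at hsum
  have hle : Module.finrank K ↥(W ⊔ degPiece J t) ≤
      Module.finrank K (homogeneousSubmodule (Fin N) K t) :=
    Submodule.finrank_mono (sup_le hWle hJle)
  have : B.card + Module.finrank K (degPiece J t) ≤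
      Module.finrank K (homogeneousSubmodule (Fin N) K t) := by
    rw [← hWrank]; omega
  unfold hilbF
  omega

end Aux

/-- Let `J` be a strongly stable monomial ideal of `k[x_0,…,x_n]` (char `k = 0`) such that
`k[x_0,…,x_n]/J` has Hilbert polynomial `p(t)` of degree `d`. Then `J` contains every
monomial of sufficiently large degree in the variables `x_{d+1},…,x_n`. -/
theorem sstable_contains_last_variables {k : Type*} [Field k] [CharZero k] {n d : ℕ}
    (J : Ideal (MvPolynomial (Fin (n + 1)) k)) (hss : SStable J)
    (p : Polynomial ℚ) (hdeg : p.natDegree = d) (hdn : d ≤ n)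
    (hp : ∃ T : ℕ, ∀ t ≥ T, (hilbF J t : ℚ) = p.eval (t : ℚ)) :
    ∃ T : ℕ, ∀ t ≥ T, ∀ α : Fin (n + 1) →₀ ℕ, degOf α = t →
      (∀ i : Fin (n + 1), α i ≠ 0 → d + 1 ≤ (i : ℕ)) → (monomial α (1 : k)) ∈ J := by
  classical
  rcases Nat.lt_or_ge d n with hdlt | hge
  swap
  · -- trivial case `d = n`: the support condition forces `α = 0`
    refine ⟨1, ?_⟩
    intro t ht α hα hsupp
    have hα0 : α = 0 := by
      ext i
      by_contra hi
      have h1 := hsupp i hi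
      have h2 := i.isLt
      omega
    rw [hα0] at hα
    have : degOf (0 : Fin (n + 1) →₀ ℕ) = 0 := by simp [degOf]
    rw [this] at hα
    omega
  obtain ⟨⟨S, hS⟩, hst⟩ := hss
  obtain ⟨T1, hT1⟩ := hp
  by_contra hcon
  push_neg at hcon
  set e : Fin (n + 1) := ⟨d + 1, by omega⟩ with he
  -- polynomial eventual bound
  set a : ℚ := (((d : ℚ) + 1)⁻¹) ^ (d + 1) with ha_def
  have ha : 0 < a := pow_pos (inv_pos.2 (by positivity)) _
  set q : Polynomial ℚ := Polynomial.C a * Polynomial.X ^ (d + 1) - p with hq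
  have hCXdeg : (Polynomial.C a * Polynomial.X ^ (d + 1)).degree = ((d + 1 : ℕ) : WithBot ℕ) :=
    Polynomial.degree_C_mul_X_pow _ ha.ne'
  have hpd : p.degree < ((d + 1 : ℕ) : WithBot ℕ) :=
    lt_of_le_of_lt Polynomial.degree_le_natDegree (by exact_mod_cast (by omega : p.natDegree < d + 1))
  have hqdeg : q.degree = ((d + 1 : ℕ) : WithBot ℕ) := by
    rw [hq, Polynomial.degree_sub_eq_left_of_degree_lt (by rw [hCXdeg]; exact hpd), hCXdeg]
  have hqnat : q.natDegree = d + 1 := Polynomial.natDegree_eq_of_degree_eq_some hqdeg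
  have hql : q.leadingCoeff = a := by
    rw [Polynomial.leadingCoeff, hqnat, hq]
    simp [Polynomial.coeff_X_pow]
    exact Polynomial.coeff_eq_zero_of_natDegree_lt (by omega)
  have htend := Polynomial.tendsto_atTop_of_leadingCoeff_nonneg q
    (by rw [hqdeg]; exact_mod_cast Nat.succ_pos d) (hql ▸ ha.le)
  obtain ⟨x0, hx0⟩ := Filter.eventually_atTop.1 (htend.eventually_gt_atTop 0)
  obtain ⟨t, htge, γ, hγdeg, hγsupp, hγnot⟩ := hcon (max T1 ⌈x0⌉₊)
  have ht1 : T1 ≤ t := le_trans (le_max_left _ _) htge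
  have htx0 : x0 ≤ (t : ℚ) := by
    calc x0 ≤ (⌈x0⌉₊ : ℚ) := Nat.le_ceil x0
    _ ≤ (t : ℚ) := by exact_mod_cast le_trans (le_max_right _ _) htge
  set m := t / (d + 1) with hm
  -- all monomials of degree t supported on indices ≤ d+1 are not in J
  have hbad : ∀ α : Fin (n + 1) →₀ ℕ, degOf α = t →
      (∀ i : Fin (n + 1), α i ≠ 0 → (i : ℕ) ≤ d + 1) → monomial α (1 : k) ∉ J := by
    intro α hα hαs hmem
    have h1 : monomial (Finsupp.single e (degOf α)) (1 : k) ∈ J :=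
      moveUp hst e _ α (fun i hi => by
        rw [Fin.le_def]; exact hαs i hi) rfl hmem
    rw [hα] at h1
    have h2 : monomial γ (1 : k) ∈ J :=
      moveDown hst e _ γ (fun i hi => by
        rw [Fin.le_def]; exact hγsupp i hi) rfl (by rw [hγdeg]; exact h1)
    exact hγnot h2
  -- the injection
  have hd1 : d + 1 ≤ n + 1 := by omega
  set ι : (Fin (d + 1) → Fin (m + 1)) → (Fin (n + 1) →₀ ℕ) := fun v =>
    (∑ i : Fin (d + 1), Finsupp.single (Fin.castLE hd1 i) (v i : ℕ)) +
      Finsupp.single e (t - ∑ i, (v i : ℕ)) with hι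
  have hsum_le : ∀ v : Fin (d + 1) → Fin (m + 1), ∑ i, (v i : ℕ) ≤ t := by
    intro v
    calc ∑ i, (v i : ℕ) ≤ ∑ _i : Fin (d + 1), m :=
          Finset.sum_le_sum (fun i _ => Nat.lt_succ_iff.1 (v i).isLt)
    _ = (d + 1) * m := by simp [Finset.sum_const, Finset.card_univ, mul_comm]
    _ ≤ t := by rw [hm, mul_comm]; exact Nat.div_mul_le_self t (d + 1)
  have happly : ∀ (v : Fin (d + 1) → Fin (m + 1)) (j : Fin (n + 1)),
      ι v j = (if h : (j : ℕ) < d + 1 then (v ⟨j, h⟩ : ℕ) else 0) +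
        (if e = j then t - ∑ i, (v i : ℕ) else 0) := by
    intro v j
    rw [hι]
    simp only [Finsupp.add_apply, Finsupp.finset_sum_apply, Finsupp.single_apply]
    congr 1
    by_cases h : (j : ℕ) < d + 1
    · rw [dif_pos h]
      have hcond : ∀ i : Fin (d + 1), (Fin.castLE hd1 i = j) ↔ (i = ⟨(j : ℕ), h⟩) := by
        intro i
        constructor
        · intro hh; exact Fin.ext (by simpa using congrArg Fin.val hh)
        · intro hh; subst hh; exact Fin.ext rfl
      rw [Finset.sum_congr rfl (fun i _ => by rw [if_congr (hcond i) rfl rfl])]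
      rw [Finset.sum_ite_eq' Finset.univ (⟨(j : ℕ), h⟩ : Fin (d + 1)) (fun i => (v i : ℕ))]
      simp
    · rw [dif_neg h]
      apply Finset.sum_eq_zero
      intro i _
      rw [if_neg]
      intro hh
      apply h
      rw [← hh]
      exact i.isLt
  have hdegι : ∀ v, degOf (ι v) = t := by
    intro v
    rw [hι]
    simp only []
    rw [degOf_add, degOf_finset_sum, degOf_single]
    have : ∑ i : Fin (d + 1), degOf (Finsupp.single (Fin.castLE hd1 i) (v i : ℕ)) =
        ∑ i, (v i : ℕ) := Finset.sum_congr rfl (fun i _ => degOf_single _ _)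
    rw [this]
    have := hsum_le v
    omega
  have hsuppι : ∀ v (j : Fin (n + 1)), ι v j ≠ 0 → (j : ℕ) ≤ d + 1 := by
    intro v j hj
    by_contra hgt
    rw [happly v j, dif_neg (by omega), if_neg (fun hh => hgt (by
      rw [← hh]))] at hj
    exact hj rfl
  have hinjι : Function.Injective ι := by
    intro v w hvw
    funext i'
    have h1 := congrArg (fun f => f (Fin.castLE hd1 i')) hvw
    rw [happly v _, happly w _] at h1
    have hlt : ((Fin.castLE hd1 i' : Fin (n + 1)) : ℕ) < d + 1 := by
      exact i'.isLt
    rw [dif_pos hlt, dif_pos hlt] at h1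
    have hne : ¬ (e = Fin.castLE hd1 i') := by
      intro hh
      have := congrArg Fin.val hh
      simp only [he, Fin.castLE] at this
      omega
    rw [if_neg hne, if_neg hne] at h1
    have : (v ⟨_, hlt⟩ : ℕ) = (w ⟨_, hlt⟩ : ℕ) := by omega
    have hmk : (⟨((Fin.castLE hd1 i' : Fin (n + 1)) : ℕ), hlt⟩ : Fin (d + 1)) = i' :=
      Fin.ext rfl
    rw [hmk] at this
    exact Fin.ext this
  set B : Finset (Fin (n + 1) →₀ ℕ) := Finset.image ι Finset.univ with hB
  have hBcard : B.card = (m + 1) ^ (d + 1) := by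
    rw [hB, Finset.card_image_of_injective _ hinjι, Finset.card_univ]
    simp [Fintype.card_fun]
  have hBdeg : ∀ α ∈ B, degOf α = t := by
    intro α hα
    obtain ⟨v, -, rfl⟩ := Finset.mem_image.1 hα
    exact hdegι v
  have hBnot : ∀ α ∈ B, monomial α (1 : k) ∉ J := by
    intro α hα
    obtain ⟨v, -, rfl⟩ := Finset.mem_image.1 hα
    exact hbad _ (hdegι v) (hsuppι v)
  have hcard := card_le_hilbF hS t B hBdeg hBnot
  -- numerics
  have hhilb : (hilbF J t : ℚ) = p.eval (t : ℚ) := hT1 t ht1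
  have h5 : 0 < Polynomial.eval (t : ℚ) q := hx0 t htx0
  have h6 : p.eval (t : ℚ) < a * (t : ℚ) ^ (d + 1) := by
    rw [hq] at h5
    simp only [Polynomial.eval_sub, Polynomial.eval_mul, Polynomial.eval_C,
      Polynomial.eval_pow, Polynomial.eval_X] at h5
    linarith
  have h8 : t < (m + 1) * (d + 1) :=
    (Nat.div_lt_iff_lt_mul (by omega : 0 < d + 1)).1 (Nat.lt_succ_self m)
  have h9 : (t : ℚ) < ((m : ℚ) + 1) * ((d : ℚ) + 1) := by exact_mod_cast h8
  have h10 : a * (t : ℚ) ^ (d + 1) ≤ ((m : ℚ) + 1) ^ (d + 1) := by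
    have hbase : ((d : ℚ) + 1)⁻¹ * (t : ℚ) ≤ (m : ℚ) + 1 := by
      rw [inv_mul_le_iff₀ (by positivity)]
      nlinarith
    calc a * (t : ℚ) ^ (d + 1) = (((d : ℚ) + 1)⁻¹ * (t : ℚ)) ^ (d + 1) := by
          rw [ha_def, mul_pow]
    _ ≤ ((m : ℚ) + 1) ^ (d + 1) := by
          apply pow_le_pow_left₀ (by positivity) hbase
  have h11 : ((m : ℚ) + 1) ^ (d + 1) ≤ (hilbF J t : ℚ) := by
    have : ((B.card : ℕ) : ℚ) ≤ (hilbF J t : ℚ) := by exact_mod_cast hcard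
    rw [hBcard] at this
    calc ((m : ℚ) + 1) ^ (d + 1) = (((m + 1) ^ (d + 1) : ℕ) : ℚ) := by push_cast; ring
    _ ≤ _ := this
  rw [hhilb] at h11
  linarith

end
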